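/- Let G be a looped simple graph with adjacency matrix A over GF(2), and for S ⊆ V(G) let A[S] denote the principal submatrix on S. For a transversal T of W(G) with no ψ-elements, letting S(T) = {v : (v,χ) ∈ T}, the GF(2)-rank of the columns of IAS(G) indexed by T equals |V(G)| − |S(T)| + rank(A[S(T)]). Consequently, setting D(G) = {S ⊆ V(G) : A[S] is nonsingular}, a subset S belongs to D(G) if and only if {(v,χ) : v∈S} ∪ {(v,φ) : v∉S} is a basis of M(IAS(G)). -/

import Mathlib

/-- The three column types of the matrix `IAS(G) = (I | A | I+A)`. -/
inductive GType : Type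
  | phi | chi | psi
  deriving DecidableEq

instance : Fintype GType :=
  ⟨{GType.phi, GType.chi, GType.psi}, fun x => by cases x <;> simp⟩

/-- The column of `IAS(G) = (I | A(G) | I+A(G))` indexed by a ground set element of
`W(G) = V × {φ, χ, ψ}`. -/
def iasCol {V : Type} [DecidableEq V] (A : Matrix V V (ZMod 2)) : V × GType → V → ZMod 2
  | (v, GType.phi) => fun w => if w = v then 1 else 0
  | (v, GType.chi) => fun w => A w v
  | (v, GType.psi) => fun w => (if w = v then 1 else 0) + A w v

/-- Independence in the binary matroid `M(IAS(G))`: a set of ground elements is independent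
iff the corresponding columns of `IAS(G)` are linearly independent over `GF(2)`. -/
def IasIndep {V : Type} [DecidableEq V] (A : Matrix V V (ZMod 2))
    (S : Set (V × GType)) : Prop :=
  LinearIndependent (ZMod 2) (fun p : S => iasCol A p.1)

/-- A circuit of `M(IAS(G))`: a minimal dependent set. -/
def IasCircuit {V : Type} [DecidableEq V] (A : Matrix V V (ZMod 2))
    (C : Set (V × GType)) : Prop :=
  ¬ IasIndep A C ∧ ∀ D : Set (V × GType), D ⊂ C → IasIndep A D

/-- The rank of a subset of the ground set of `M(IAS(G))`: the `GF(2)`-rank of the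
corresponding set of columns of `IAS(G)`. -/
noncomputable def iasRk {V : Type} [Fintype V] [DecidableEq V] (A : Matrix V V (ZMod 2))
    (S : Set (V × GType)) : ℕ :=
  Module.finrank (ZMod 2) (Submodule.span (ZMod 2) (iasCol A '' S))

/-- The transversal `T_S = {(v,χ) : v ∈ S} ∪ {(v,φ) : v ∉ S}` of `W(G)` (a transversal
with no `ψ`-elements). -/
def chiPhiTransversal {V : Type} (S : Finset V) : Set (V × GType) :=
  {p | (p.2 = GType.chi ∧ p.1 ∈ S) ∨ (p.2 = GType.phi ∧ p.1 ∉ S)}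

namespace DeltaAux
open Matrix

variable {V : Type} [Fintype V] [DecidableEq V] (A : Matrix V V (ZMod 2)) (S : Finset V)

/-- The column of `IAS(G)` selected by the transversal `T_S` at `v`. -/
def fcols : V → V → ZMod 2 := fun v w => if v ∈ S then A w v else if w = v then 1 else 0

lemma image_eq : iasCol A '' chiPhiTransversal S = Set.range (fcols A S) := by
  ext x
  constructor
  · rintro ⟨⟨v, t⟩, hp, rfl⟩
    rcases hp with ⟨ht, hv⟩ | ⟨ht, hv⟩ <;> subst ht <;>
      exact ⟨v, by funext w; simp [iasCol, fcols, hv]⟩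
  · rintro ⟨v, rfl⟩
    by_cases hv : v ∈ S
    · exact ⟨(v, GType.chi), Or.inl ⟨rfl, hv⟩, by funext w; simp [iasCol, fcols, hv]⟩
    · exact ⟨(v, GType.phi), Or.inr ⟨rfl, hv⟩, by funext w; simp [iasCol, fcols, hv]⟩

def transEquiv : V ≃ chiPhiTransversal S :=
    { toFun := fun v => ⟨(v, if v ∈ S then GType.chi else GType.phi), by
        by_cases hv : v ∈ S <;> simp [chiPhiTransversal, hv]⟩
      invFun := fun p => p.1.1
      left_inv := fun v => rfl
      right_inv := by
        rintro ⟨⟨v, t⟩, hp⟩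
        apply Subtype.ext
        rcases hp with ⟨ht, hv⟩ | ⟨ht, hv⟩ <;> simp_all <;> exact ht.symm }

lemma indep_iff : IasIndep A (chiPhiTransversal S) ↔
    LinearIndependent (ZMod 2) (fcols A S) := by
  set e := transEquiv S with he
  have hfe : (fun p : chiPhiTransversal S => iasCol A p.1) ∘ e = fcols A S := by
    funext v w; by_cases hv : v ∈ S <;> simp [he, transEquiv, fcols, iasCol, hv]
  unfold IasIndep
  exact (linearIndependent_equiv' e hfe).symm

set_option synthInstance.maxHeartbeats 1000000 in
lemma rank_formula :
    Module.finrank (ZMod 2) (Submodule.span (ZMod 2) (Set.range (fcols A S))) + S.card =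
      Fintype.card V +
        (A.submatrix (fun a : {a : V // a ∈ S} => a.val) (fun a : {a : V // a ∈ S} => a.val)).rank := by
  classical
  set Asub := A.submatrix (fun a : {a : V // a ∈ S} => a.val) (fun a : {a : V // a ∈ S} => a.val)
    with hAsub
  set π : (V → ZMod 2) →ₗ[ZMod 2] ({a : V // a ∈ S} → ZMod 2) :=
    LinearMap.funLeft (ZMod 2) (ZMod 2) Subtype.val with hπ
  set N := Submodule.span (ZMod 2) (Set.range (fcols A S)) with hN
  -- kernel of π is contained in N
  have hker : LinearMap.ker π ≤ N := by
    intro g hg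
    have hg' : ∀ a : {a : V // a ∈ S}, g a.val = 0 := fun a => congrFun hg a
    have hrepr := pi_eq_sum_univ g
    rw [hrepr]
    refine Submodule.sum_mem _ fun w _ => ?_
    by_cases hw : w ∈ S
    · rw [hg' ⟨w, hw⟩, zero_smul]; exact Submodule.zero_mem _
    · refine Submodule.smul_mem _ _ (Submodule.subset_span ⟨w, ?_⟩)
      funext j; simp [fcols, hw, eq_comm]
  set φ : N →ₗ[ZMod 2] ({a : V // a ∈ S} → ZMod 2) := π ∘ₗ N.subtype with hφ
  have hrn : Module.finrank (ZMod 2) (LinearMap.range φ)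
      + Module.finrank (ZMod 2) (LinearMap.ker φ) = Module.finrank (ZMod 2) N :=
    LinearMap.finrank_range_add_finrank_ker φ
  -- compute the range of φ
  have hrange : LinearMap.range φ = Submodule.span (ZMod 2) (Set.range Asubᵀ) := by
    rw [hφ, LinearMap.range_comp, Submodule.range_subtype, hN, Submodule.map_span,
      ← Set.range_comp]
    apply le_antisymm <;> rw [Submodule.span_le]
    · rintro _ ⟨v, rfl⟩
      by_cases hv : v ∈ S
      · refine Submodule.subset_span ⟨⟨v, hv⟩, ?_⟩
        funext a; simp [fcols, hv, hAsub, Matrix.transpose_apply, Matrix.submatrix_apply, hπ]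
      · have : (π ∘ fcols A S) v = 0 := by
          funext a
          have : a.val ≠ v := fun h => hv (h ▸ a.prop)
          simp [fcols, hv, hπ, LinearMap.funLeft, this]
        rw [this]; exact Submodule.zero_mem _
    · rintro _ ⟨b, rfl⟩
      refine Submodule.subset_span ⟨b.val, ?_⟩
      funext a; simp [fcols, b.prop, hAsub, hπ]
  have hrange' : Module.finrank (ZMod 2) (LinearMap.range φ) = Asub.rank := by
    rw [hrange, Matrix.rank_eq_finrank_span_cols]
    rfl
  -- compute the kernel of φ
  have hkerφ : LinearMap.ker φ = Submodule.comap N.subtype (LinearMap.ker π) := by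
    rw [hφ, LinearMap.ker_comp]
  have hker' : Module.finrank (ZMod 2) (LinearMap.ker φ)
      = Module.finrank (ZMod 2) (LinearMap.ker π) := by
    rw [hkerφ]
    exact (Submodule.comapSubtypeEquivOfLe hker).finrank_eq
  -- finrank of ker π
  have hπsurj : Function.Surjective π := LinearMap.funLeft_surjective_of_injective _ _ _
    Subtype.val_injective
  have hrnπ : Module.finrank (ZMod 2) (LinearMap.range π)
      + Module.finrank (ZMod 2) (LinearMap.ker π)
      = Module.finrank (ZMod 2) (V → ZMod 2) := LinearMap.finrank_range_add_finrank_ker π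
  have hrangeπ : LinearMap.range π = ⊤ := LinearMap.range_eq_top.mpr hπsurj
  rw [hrangeπ, finrank_top] at hrnπ
  have h1 : Module.finrank (ZMod 2) ({a : V // a ∈ S} → ZMod 2) = S.card := by
    rw [Module.finrank_pi, Fintype.card_coe]
  have h2 : Module.finrank (ZMod 2) (V → ZMod 2) = Fintype.card V := Module.finrank_pi _
  rw [h1, h2] at hrnπ
  omega

end DeltaAux

/-- for every `S ⊆ V(G)`, the `GF(2)`-rank of the columns of `IAS(G)`
indexed by `T_S` equals `|V| − |S| + rank A[S]` (stated additively), and consequently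
`A[S]` is nonsingular iff `T_S = {(v,χ) : v∈S} ∪ {(v,φ) : v∉S}` is a basis of
`M(IAS(G))` (independent and spanning). -/
theorem delta_matroid_from_isotropic {V : Type} [Fintype V] [DecidableEq V]
    (A : Matrix V V (ZMod 2)) (hA : A.IsSymm) :
    ∀ S : Finset V,
      (iasRk A (chiPhiTransversal S) + S.card =
          Fintype.card V +
            (A.submatrix (fun a : {a : V // a ∈ S} => a.val) (fun a : {a : V // a ∈ S} => a.val)).rank) ∧
      (IsUnit (A.submatrix (fun a : {a : V // a ∈ S} => a.val) (fun a : {a : V // a ∈ S} => a.val)).det ↔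
        (IasIndep A (chiPhiTransversal S) ∧
          Submodule.span (ZMod 2) (iasCol A '' chiPhiTransversal S) = ⊤)) := by
  intro S
  classical
  set Asub := A.submatrix (fun a : {a : V // a ∈ S} => a.val) (fun a : {a : V // a ∈ S} => a.val)
    with hAsub
  have hmain : iasRk A (chiPhiTransversal S) + S.card = Fintype.card V + Asub.rank := by
    rw [iasRk, DeltaAux.image_eq]
    exact DeltaAux.rank_formula A S
  refine ⟨hmain, ?_⟩
  have hfr_pi : Module.finrank (ZMod 2) (V → ZMod 2) = Fintype.card V := Module.finrank_pi _
  constructor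
  · intro h
    have hu : IsUnit Asub := (Matrix.isUnit_iff_isUnit_det _).mpr h
    have hr : Asub.rank = S.card := by rw [Matrix.rank_of_isUnit Asub hu, Fintype.card_coe]
    have hRk : iasRk A (chiPhiTransversal S) = Fintype.card V := by omega
    constructor
    · rw [DeltaAux.indep_iff, linearIndependent_iff_card_eq_finrank_span]
      rw [Set.finrank, ← DeltaAux.image_eq]
      exact hRk.symm
    · apply Submodule.eq_top_of_finrank_eq
      rw [hfr_pi]
      exact hRk
  · rintro ⟨hind, hspan⟩
    have hRk : iasRk A (chiPhiTransversal S) = Fintype.card V := by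
      rw [iasRk, hspan, finrank_top, hfr_pi]
    have hr : Asub.rank = S.card := by omega
    have hcard : Asub.rank = Fintype.card {a : V // a ∈ S} := by rw [hr, Fintype.card_coe]
    have hsurj : Function.Surjective Asub.mulVecLin := by
      rw [← LinearMap.range_eq_top]
      apply Submodule.eq_top_of_finrank_eq
      rw [Module.finrank_pi]
      exact hcard
    have hinj : Function.Injective Asub.mulVecLin :=
      LinearMap.injective_iff_surjective.mpr hsurj
    have hdet : Asub.det ≠ 0 := by
      intro h0
      obtain ⟨v, hv, hmv⟩ := Matrix.exists_mulVec_eq_zero_iff.mpr h0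
      apply hv
      have : Asub.mulVecLin v = Asub.mulVecLin 0 := by
        simpa [Matrix.mulVecLin_apply] using hmv
      simpa using hinj this
    exact isUnit_iff_ne_zero.mpr hdet
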